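/- Let M be an n×n symmetric matrix with integer entries whose distinct eigenvalues are λ_1, …, λ_m, and suppose λ_1, …, λ_l are simple eigenvalues (each of multiplicity one), where 1 ≤ l ≤ m. Define q(x) = ∏_{i=l+1}^{m}(x−λ_i) and suppose q(x) ∈ ℤ[x]. For each k ∈ {1,…,m}, let α_{k,j} = ‖P_{λ_k} e_j‖, where P_{λ_k} is the orthogonal projection of ℝ^n onto the eigenspace of λ_k and e_1, …, e_n is the standard basis of ℝ^n. Then for all i, j ∈ {1,…,n}, there exist signs ε_2, …, ε_l ∈ {±1} such that q(λ_1)·α_{1,i}·α_{1,j} + Σ_{k=2}^{l} q(λ_k)·ε_k·α_{k,i}·α_{k,j} is an integer. -/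

import Mathlib

open Polynomial

/-- The *angle* `α_{μ,j}` of a real `n × n` matrix `M`: the norm of the orthogonal
projection of the `j`-th standard basis vector of `ℝ^n` onto the eigenspace of `M`
for the eigenvalue `μ`. -/
noncomputable def matrixAngle {n : ℕ} (M : Matrix (Fin n) (Fin n) ℝ) (μ : ℝ) (j : Fin n) : ℝ :=
  ‖(Submodule.orthogonalProjectionOnto (Module.End.eigenspace (Matrix.toEuclideanLin M) μ)
      (EuclideanSpace.single j (1 : ℝ)) : EuclideanSpace ℝ (Fin n))‖

private lemma aux_toEuclideanLin_aeval {n : ℕ} (A : Matrix (Fin n) (Fin n) ℝ) (p : ℝ[X]) :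
    Matrix.toEuclideanLin (Polynomial.aeval A p) = Polynomial.aeval (Matrix.toEuclideanLin A) p := by
  have h : ∀ N : Matrix (Fin n) (Fin n) ℝ, Matrix.toEuclideanLin N =
      (Matrix.toLinAlgEquiv (PiLp.basisFun 2 ℝ (Fin n))).toAlgHom N := by
    intro N
    rw [Matrix.toEuclideanLin_eq_toLin]
    rfl
  rw [h, h]
  exact (Polynomial.aeval_algHom_apply (Matrix.toLinAlgEquiv (PiLp.basisFun 2 ℝ (Fin n))).toAlgHom A p).symm

private lemma aux_entry {n : ℕ} (N : Matrix (Fin n) (Fin n) ℝ) (i j : Fin n) :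
    inner ℝ (Matrix.toEuclideanLin N (EuclideanSpace.single i (1:ℝ)))
      (EuclideanSpace.single j (1:ℝ)) = N j i := by
  simp [Matrix.toEuclideanLin_apply, EuclideanSpace.inner_single_right, Matrix.mulVec_single]

private lemma aux_proj_norm {n : ℕ} (v w : EuclideanSpace ℝ (Fin n)) (hv : ‖v‖ = 1)
    (K : Submodule ℝ (EuclideanSpace ℝ (Fin n))) (hK : K = Submodule.span ℝ {v}) :
    ‖(Submodule.orthogonalProjectionOnto K w : EuclideanSpace ℝ (Fin n))‖ = |inner ℝ v w| := by
  subst hK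
  rw [Submodule.coe_orthogonalProjectionOnto_apply, Submodule.starProjection_singleton, norm_smul, hv]
  simp [Real.norm_eq_abs, hv]

private lemma aux_span {n : ℕ} (K : Submodule ℝ (EuclideanSpace ℝ (Fin n)))
    (v : EuclideanSpace ℝ (Fin n))
    (hv : v ≠ 0) (hvK : v ∈ K) (h1 : Module.finrank ℝ K = 1) :
    K = Submodule.span ℝ {v} := by
  refine (Submodule.eq_of_le_of_finrank_eq
    ((Submodule.span_singleton_le_iff_mem v K).2 hvK) ?_).symm
  rw [h1, finrank_span_singleton hv]

private lemma aux_expand {n : ℕ} (T : EuclideanSpace ℝ (Fin n) →ₗ[ℝ] EuclideanSpace ℝ (Fin n))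
    (hT : T.IsSymmetric) (hn : Module.finrank ℝ (EuclideanSpace ℝ (Fin n)) = n)
    (p : ℝ[X]) (x y : EuclideanSpace ℝ (Fin n)) :
    inner ℝ (Polynomial.aeval T p x) y =
      ∑ r, p.eval (hT.eigenvalues hn r) * ((hT.eigenvectorBasis hn).repr x r *
        (hT.eigenvectorBasis hn).repr y r) := by
  set B := hT.eigenvectorBasis hn
  set γ := hT.eigenvalues hn
  have hx : x = ∑ r, B.repr x r • B r := (B.sum_repr x).symm
  conv_lhs => rw [hx]
  rw [map_sum, sum_inner]
  refine Finset.sum_congr rfl fun r _ => ?_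
  rw [map_smul, Module.End.aeval_apply_of_hasEigenvector (hT.hasEigenvector_eigenvectorBasis hn r)]
  rw [real_inner_smul_left, real_inner_smul_left, ← B.repr_apply_apply y r]
  simp only [RCLike.ofReal_real_eq_id, id_eq]
  ring

/-- Let `M` be a symmetric integer matrix whose distinct eigenvalues are
`ev 1, …, ev m`, the first `l` of which are simple (`1 ≤ l ≤ m`).  Suppose
`q(x) = ∏_{i=l+1}^m (x - ev i)` has integer coefficients.  Then for all
`i, j`, there are signs `ε_2, …, ε_l ∈ {±1}` such that
`q(ev 1)·α_{1,i}·α_{1,j} + Σ_{k=2}^l q(ev k)·ε_k·α_{k,i}·α_{k,j}` is an integer. -/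
theorem angles_integrality (n m l : ℕ) (hl : 1 ≤ l) (hlm : l ≤ m)
    (M : Matrix (Fin n) (Fin n) ℤ) (hsym : M.IsSymm)
    (ev : ℕ → ℝ)
    (hdist : ∀ i j, 1 ≤ i → i ≤ m → 1 ≤ j → j ≤ m → ev i = ev j → i = j)
    (heig : ∀ i, 1 ≤ i → i ≤ m →
      Module.End.HasEigenvalue (Matrix.toEuclideanLin (M.map ((↑) : ℤ → ℝ))) (ev i))
    (hall : ∀ μ : ℝ,
      Module.End.HasEigenvalue (Matrix.toEuclideanLin (M.map ((↑) : ℤ → ℝ))) μ →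
      ∃ i, 1 ≤ i ∧ i ≤ m ∧ ev i = μ)
    (hsimple : ∀ i, 1 ≤ i → i ≤ l →
      Module.finrank ℝ
        (Module.End.eigenspace (Matrix.toEuclideanLin (M.map ((↑) : ℤ → ℝ))) (ev i)) = 1)
    (q : Polynomial ℤ)
    (hq : q.map (Int.castRingHom ℝ) = ∏ i ∈ Finset.Ioc l m, (X - C (ev i))) :
    ∀ i j : Fin n, ∃ ε : ℕ → ℝ, (∀ k, ε k = 1 ∨ ε k = -1) ∧
      ∃ z : ℤ,
        (Polynomial.aeval (ev 1) q) *
            matrixAngle (M.map ((↑) : ℤ → ℝ)) (ev 1) i *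
            matrixAngle (M.map ((↑) : ℤ → ℝ)) (ev 1) j
          + ∑ k ∈ Finset.Ioc 1 l,
              (Polynomial.aeval (ev k) q) * ε k *
                matrixAngle (M.map ((↑) : ℤ → ℝ)) (ev k) i *
                matrixAngle (M.map ((↑) : ℤ → ℝ)) (ev k) j
          = (z : ℝ) := by
  classical
  intro i j
  set A : Matrix (Fin n) (Fin n) ℝ := M.map ((↑) : ℤ → ℝ) with hAdef
  set T := Matrix.toEuclideanLin A with hTdef
  have hAh : A.IsHermitian := by
    rw [Matrix.IsHermitian, Matrix.conjTranspose]
    ext a b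
    simpa [hAdef] using (hsym.map ((↑) : ℤ → ℝ)).apply a b
  have hTs : T.IsSymmetric := Matrix.isHermitian_iff_isSymmetric.1 hAh
  have hn : Module.finrank ℝ (EuclideanSpace ℝ (Fin n)) = n := finrank_euclideanSpace_fin
  set B := hTs.eigenvectorBasis hn with hBdef
  set γ := hTs.eigenvalues hn with hγdef
  set p : ℝ[X] := q.map (Int.castRingHom ℝ) with hpdef
  set e : Fin n → EuclideanSpace ℝ (Fin n) := fun t => EuclideanSpace.single t 1 with hedef
  set c : Fin n → Fin n → ℝ := fun r t => B.repr (e t) r with hcdef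
  set z0 : ℤ := (Polynomial.aeval M q) j i with hz0def
  have hpe : ∀ x : ℝ, p.eval x = Polynomial.aeval x q := by
    intro x; rw [hpdef, Polynomial.eval_map, Polynomial.aeval_def]; rfl
  have hmem : ∀ r, B r ∈ Module.End.eigenspace T (γ r) :=
    fun r => (hTs.hasEigenvector_eigenvectorBasis hn r).1
  have hBne : ∀ r, B r ≠ 0 := fun r => by simpa using B.toBasis.ne_zero r
  have hBnorm : ∀ r, ‖B r‖ = 1 := fun r => B.orthonormal.1 r
  -- The key identity: the spectral expansion of an integer matrix entry
  have key : ∑ r, p.eval (γ r) * (c r i * c r j) = (z0 : ℝ) := by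
    have h1 := aux_expand T hTs hn p (e i) (e j)
    have h2 : Polynomial.aeval T p = Matrix.toEuclideanLin ((Polynomial.aeval M q).map ((↑) : ℤ → ℝ)) := by
      have h3 : Polynomial.aeval A (q.map (Int.castRingHom ℝ)) = Polynomial.aeval A q := by
        rw [← algebraMap_int_eq, Polynomial.aeval_map_algebraMap]
      have h4 : Polynomial.aeval A q = (Polynomial.aeval M q).map ((↑) : ℤ → ℝ) := by
        have h5 : A = (Int.castRingHom ℝ).mapMatrix.toIntAlgHom M := rfl
        rw [h5, Polynomial.aeval_algHom_apply]; rfl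
      rw [hTdef, ← aux_toEuclideanLin_aeval, hpdef, h3, h4]
    rw [h2, aux_entry] at h1
    rw [← h1]
    simp [Matrix.map_apply, hz0def]
  -- existence of an eigenvector index for each eigenvalue
  have hex : ∀ k, 1 ≤ k → k ≤ m → ∃ r, γ r = ev k := by
    intro k h1 h2
    by_contra hno
    push_neg at hno
    obtain ⟨v, hv1, hv2⟩ := (heig k h1 h2).exists_hasEigenvector
    apply hv2
    have hall0 : ∀ r, B.repr v r = 0 := by
      intro r
      rw [B.repr_apply_apply]
      exact hTs.orthogonalFamily_eigenspaces (hno r) ⟨B r, hmem r⟩ ⟨v, hv1⟩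
    have hrv : B.repr v = 0 := by
      ext r; exact hall0 r
    have := congrArg B.repr.symm hrv
    simpa using this
  -- uniqueness for simple eigenvalues
  have huniq : ∀ k, 1 ≤ k → k ≤ l → ∀ r r', γ r = ev k → γ r' = ev k → r = r' := by
    intro k h1 h2 r r' hr hr'
    by_contra hrr
    have hspan : Module.End.eigenspace T (ev k) = Submodule.span ℝ {B r} :=
      aux_span _ _ (hBne r) (hr ▸ hmem r) (hsimple k h1 h2)
    have hmem' : B r' ∈ Submodule.span ℝ {B r} := hspan ▸ (hr' ▸ hmem r')
    obtain ⟨a, ha⟩ := Submodule.mem_span_singleton.1 hmem'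
    have horth : inner ℝ (B r) (B r') = (0 : ℝ) := B.orthonormal.2 hrr
    rw [← ha, real_inner_smul_right, real_inner_self_eq_norm_sq, hBnorm r] at horth
    simp at horth
    exact hBne r' (by rw [← ha, horth, zero_smul])
  -- a choice of eigenvector index for each eigenvalue
  set g : ℕ → Fin n := fun k => if h : ∃ r, γ r = ev k then h.choose else i with hgdef
  have hg : ∀ k, 1 ≤ k → k ≤ m → γ (g k) = ev k := by
    intro k h1 h2
    rw [hgdef]
    simp only [dif_pos (hex k h1 h2)]
    exact (hex k h1 h2).choose_spec
  set S : Finset (Fin n) := (Finset.Icc 1 l).image g with hSdef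
  have hzero : ∀ r, r ∉ S → p.eval (γ r) = 0 := by
    intro r hr
    obtain ⟨k', hk1, hk2, hk3⟩ := hall (γ r) (hTs.hasEigenvalue_eigenvalues hn r)
    have hk1l : l < k' := by
      by_contra hle
      push_neg at hle
      apply hr
      rw [hSdef, Finset.mem_image]
      exact ⟨k', Finset.mem_Icc.2 ⟨hk1, hle⟩,
        huniq k' hk1 hle (g k') r (hg k' hk1 (le_trans hle hlm)) hk3.symm⟩
    rw [hq, Polynomial.eval_prod]
    refine Finset.prod_eq_zero (Finset.mem_Ioc.2 ⟨hk1l, hk2⟩) ?_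
    simp [hk3]
  have hsum1 : ∑ r, p.eval (γ r) * (c r i * c r j) = ∑ r ∈ S, p.eval (γ r) * (c r i * c r j) := by
    refine (Finset.sum_subset (Finset.subset_univ S) ?_).symm
    intro r _ hr
    rw [hzero r hr, zero_mul]
  have hginj : ∀ a ∈ Finset.Icc 1 l, ∀ b ∈ Finset.Icc 1 l, g a = g b → a = b := by
    intro a ha b hb hab
    rw [Finset.mem_Icc] at ha hb
    refine hdist a b ha.1 (le_trans ha.2 hlm) hb.1 (le_trans hb.2 hlm) ?_
    rw [← hg a ha.1 (le_trans ha.2 hlm), ← hg b hb.1 (le_trans hb.2 hlm), hab]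
  have hsum2 : ∑ r ∈ S, p.eval (γ r) * (c r i * c r j)
      = ∑ k ∈ Finset.Icc 1 l, p.eval (ev k) * (c (g k) i * c (g k) j) := by
    rw [hSdef, Finset.sum_image hginj]
    refine Finset.sum_congr rfl fun k hk => ?_
    rw [Finset.mem_Icc] at hk
    rw [hg k hk.1 (le_trans hk.2 hlm)]
  -- angles
  have hα : ∀ k, 1 ≤ k → k ≤ l → ∀ t, matrixAngle A (ev k) t = |c (g k) t| := by
    intro k h1 h2 t
    have hspan : Module.End.eigenspace T (ev k) = Submodule.span ℝ {B (g k)} :=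
      aux_span _ _ (hBne (g k)) ((hg k h1 (le_trans h2 hlm)) ▸ hmem (g k)) (hsimple k h1 h2)
    rw [matrixAngle]
    rw [aux_proj_norm (B (g k)) (e t) (hBnorm (g k)) _ hspan]
    rw [hcdef]
    simp only
    rw [B.repr_apply_apply]
  -- signs
  set sg : ℕ → ℝ := fun k => if c (g k) i * c (g k) j < 0 then -1 else 1 with hsgdef
  have hsgval : ∀ k, sg k = if c (g k) i * c (g k) j < 0 then -1 else 1 := fun k => rfl
  have hsg1 : ∀ k, sg k = 1 ∨ sg k = -1 := by
    intro k; rw [hsgval]; split <;> simp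
  have hsgsq : ∀ k, sg k * sg k = 1 := by
    intro k; rcases hsg1 k with h | h <;> rw [h] <;> norm_num
  have hsk : ∀ k, c (g k) i * c (g k) j = sg k * (|c (g k) i| * |c (g k) j|) := by
    intro k
    rw [hsgval, ← abs_mul]
    split
    · rw [neg_one_mul, abs_of_neg (by assumption), neg_neg]
    · rw [one_mul, abs_of_nonneg (le_of_not_gt (by assumption))]
  refine ⟨fun k => sg 1 * sg k, fun k => ?_, ?_⟩
  · show sg 1 * sg k = 1 ∨ sg 1 * sg k = -1
    rcases hsg1 1 with h1 | h1 <;> rcases hsg1 k with h2 | h2 <;> rw [h1, h2] <;> norm_num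
  · refine ⟨if c (g 1) i * c (g 1) j < 0 then -z0 else z0, ?_⟩
    have hIcc : Finset.Icc 1 l = Finset.cons 1 (Finset.Ioc 1 l) (by simp) :=
      Finset.Icc_eq_cons_Ioc hl
    have hfinal : (Polynomial.aeval (ev 1) q) * matrixAngle A (ev 1) i * matrixAngle A (ev 1) j
          + ∑ k ∈ Finset.Ioc 1 l, (Polynomial.aeval (ev k) q) * (sg 1 * sg k) *
              matrixAngle A (ev k) i * matrixAngle A (ev k) j
        = sg 1 * ∑ k ∈ Finset.Icc 1 l, p.eval (ev k) * (c (g k) i * c (g k) j) := by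
      rw [hIcc, Finset.sum_cons, mul_add, Finset.mul_sum]
      congr 1
      · rw [hα 1 le_rfl hl i, hα 1 le_rfl hl j, hsk 1, ← hpe (ev 1)]
        rcases hsg1 1 with h1 | h1 <;> rw [h1] <;> ring
      · refine Finset.sum_congr rfl fun k hk => ?_
        rw [Finset.mem_Ioc] at hk
        rw [hα k (le_of_lt hk.1) hk.2 i, hα k (le_of_lt hk.1) hk.2 j, hsk k, ← hpe (ev k)]
        ring
    rw [hfinal, ← hsum2, ← hsum1, key, hsgval]
    split
    · push_cast; ring
    · ring
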